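/- Suppose hospitals have matroid rank valuations and doctors have cardinal utilities c_d : H → ℝ with c_d(unallocated) = 0. Every non-redundant allocation that maximizes doctor utilitarian welfare among all non-redundant allocations is stable. -/
import Mathlib


open Finset

/-- A matroid rank function on subsets of a finite ground set. -/
def IsMRF {α : Type*} [DecidableEq α] (v : Finset α → ℤ) : Prop :=
  v ∅ = 0 ∧
  (∀ (S : Finset α) (d : α), d ∉ S →
    v (insert d S) - v S = 0 ∨ v (insert d S) - v S = 1) ∧
  (∀ (S T : Finset α) (d : α), S ⊆ T → d ∉ T →
    v (insert d T) - v T ≤ v (insert d S) - v S)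

/-- The bundle of doctors assigned to hospital `h` under allocation `X`. -/
def bundle {n m : ℕ} (X : Fin m → Option (Fin n)) (h : Fin n) : Finset (Fin m) :=
  Finset.univ.filter (fun d => X d = some h)

/-- An allocation is non-redundant if every hospital's bundle is independent. -/
def NonRedundant {n m : ℕ} (v : Fin n → Finset (Fin m) → ℤ)
    (X : Fin m → Option (Fin n)) : Prop :=
  ∀ h, v h (bundle X h) = (bundle X h).card

/-- Hospital utilitarian welfare. -/
def USW {n m : ℕ} (v : Fin n → Finset (Fin m) → ℤ) (X : Fin m → Option (Fin n)) : ℤ :=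
  ∑ h, v h (bundle X h)

/-- Doctor `d` strictly prefers the first outcome to the second; every hospital is
strictly preferred to being unallocated (`none`). -/
def OptStrictPref {n m : ℕ} (P : Fin m → Fin n → Fin n → Prop) (d : Fin m) :
    Option (Fin n) → Option (Fin n) → Prop
  | some h, some h' => P d h h'
  | some _, none => True
  | none, _ => False

/-- `(h, S)` is a blocking pair for `X`. -/
def IsBlockingPair {n m : ℕ} (v : Fin n → Finset (Fin m) → ℤ)
    (P : Fin m → Fin n → Fin n → Prop) (X : Fin m → Option (Fin n))
    (h : Fin n) (S : Finset (Fin m)) : Prop :=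
  v h S = S.card ∧ v h (bundle X h) < v h S ∧
    ∀ d ∈ S, X d = some h ∨ OptStrictPref P d (some h) (X d)

/-- An allocation is stable if it is non-redundant and admits no blocking pair. -/
def Stable {n m : ℕ} (v : Fin n → Finset (Fin m) → ℤ)
    (P : Fin m → Fin n → Fin n → Prop) (X : Fin m → Option (Fin n)) : Prop :=
  NonRedundant v X ∧ ¬ ∃ h S, IsBlockingPair v P X h S

/-- The utility of doctor `d` for an outcome (a hospital, or `none` for unallocated,
which is worth `0`). -/
def optUtil {n m : ℕ} (c : Fin m → Fin n → ℝ) (d : Fin m) : Option (Fin n) → ℝ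
  | none => 0
  | some h => c d h

/-- Doctor utilitarian welfare. -/
def DUSW {n m : ℕ} (c : Fin m → Fin n → ℝ) (X : Fin m → Option (Fin n)) : ℝ :=
  ∑ d, optUtil c d (X d)

/-- Stability with cardinal doctor utilities: there is no hospital `h` and independent
set `S` with `v h S > v h X_h` such that every doctor in `S` weakly prefers `h` to its
current assignment, strictly unless already assigned to `h`. -/
def CStable {n m : ℕ} (v : Fin n → Finset (Fin m) → ℤ) (c : Fin m → Fin n → ℝ)
    (X : Fin m → Option (Fin n)) : Prop :=
  NonRedundant v X ∧
  ¬ ∃ (h : Fin n) (S : Finset (Fin m)),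
      v h S = S.card ∧ v h (bundle X h) < v h S ∧
      ∀ d ∈ S, X d = some h ∨ optUtil c d (X d) < c d h


section MRFAux

variable {α : Type*} [DecidableEq α] {v : Finset α → ℤ}

lemma mrf_marg_nonneg (hv : IsMRF v) {S : Finset α} {d : α} (hd : d ∉ S) :
    v S ≤ v (insert d S) := by
  rcases hv.2.1 S d hd with h | h <;> omega

lemma mrf_union_ge (hv : IsMRF v) (A U : Finset α) : v A ≤ v (A ∪ U) := by
  induction U using Finset.induction_on with
  | empty => simp
  | @insert a U ha ih =>
    rw [Finset.union_insert]
    by_cases hA : a ∈ A ∪ U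
    · rwa [Finset.insert_eq_self.2 hA]
    · exact le_trans ih (mrf_marg_nonneg hv hA)

lemma mrf_mono (hv : IsMRF v) {T S : Finset α} (hTS : T ⊆ S) : v T ≤ v S := by
  have := mrf_union_ge hv T S
  rwa [Finset.union_eq_right.2 hTS] at this

lemma mrf_card_bound (hv : IsMRF v) (A U : Finset α) :
    v (A ∪ U) ≤ v A + U.card := by
  induction U using Finset.induction_on with
  | empty => simp
  | @insert a U ha ih =>
    rw [Finset.union_insert, Finset.card_insert_of_notMem ha]
    by_cases hA : a ∈ A ∪ U
    · rw [Finset.insert_eq_self.2 hA]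
      push_cast
      omega
    · have := hv.2.1 (A ∪ U) a hA
      push_cast
      omega

lemma mrf_le_card (hv : IsMRF v) (S : Finset α) : v S ≤ S.card := by
  have := mrf_card_bound hv ∅ S
  rwa [Finset.empty_union, hv.1, zero_add] at this

lemma mrf_subset_indep (hv : IsMRF v) {S T : Finset α}
    (hS : v S = S.card) (hTS : T ⊆ S) : v T = T.card := by
  have h1 : v T ≤ T.card := mrf_le_card hv T
  have h2 : v S ≤ v T + (S \ T).card := by
    have := mrf_card_bound hv T (S \ T)
    rwa [Finset.union_sdiff_of_subset hTS] at this
  have h3 : (S \ T).card = S.card - T.card := Finset.card_sdiff_of_subset hTS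
  have h4 : T.card ≤ S.card := Finset.card_le_card hTS
  omega

lemma mrf_flat (hv : IsMRF v) (A U : Finset α)
    (hU : ∀ a ∈ U, a ∉ A → v (insert a A) = v A) : v (A ∪ U) = v A := by
  induction U using Finset.induction_on with
  | empty => simp
  | @insert a U ha ih =>
    have ih' := ih (fun b hb hbA => hU b (Finset.mem_insert_of_mem hb) hbA)
    rw [Finset.union_insert]
    by_cases hA : a ∈ A ∪ U
    · rw [Finset.insert_eq_self.2 hA]; exact ih'
    · have haA : a ∉ A := fun h => hA (Finset.mem_union_left _ h)
      have hsub := hv.2.2 A (A ∪ U) a Finset.subset_union_left hA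
      have h0 := hU a (Finset.mem_insert_self a U) haA
      have hge := mrf_marg_nonneg hv hA
      omega

lemma mrf_exchange (hv : IsMRF v) (A B : Finset α) (hAB : v A < v B) :
    ∃ d ∈ B, d ∉ A ∧ v (insert d A) = v A + 1 := by
  by_contra hcon
  push_neg at hcon
  have hflat : v (A ∪ B) = v A := by
    apply mrf_flat hv
    intro a ha haA
    rcases hv.2.1 A a haA with h | h
    · omega
    · exact absurd (by omega) (hcon a ha haA)
  have := mrf_mono hv (Finset.subset_union_right : B ⊆ A ∪ B)
  omega

end MRFAux

/-- With matroid rank hospital valuations and cardinal doctor utilities, every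
non-redundant allocation maximizing doctor utilitarian welfare among all
non-redundant allocations is stable. -/
theorem max_doctor_usw_stable {n m : ℕ} (v : Fin n → Finset (Fin m) → ℤ)
    (c : Fin m → Fin n → ℝ) (hv : ∀ h, IsMRF (v h))
    (X : Fin m → Option (Fin n)) (hX : NonRedundant v X)
    (hmax : ∀ Y : Fin m → Option (Fin n), NonRedundant v Y → DUSW c Y ≤ DUSW c X) :
    CStable v c X := by
  refine ⟨hX, ?_⟩
  rintro ⟨h, S, hS, hlt, hpref⟩
  obtain ⟨d, hdS, hdA, hins⟩ := mrf_exchange (hv h) (bundle X h) S hlt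
  have hne : X d ≠ some h := by
    intro hc
    exact hdA (by simp [bundle, hc])
  set Y := Function.update X d (some h) with hY
  have hYd : Y d = some h := Function.update_self _ _ _
  have hYe : ∀ e, e ≠ d → Y e = X e := fun e he => Function.update_of_ne he _ _
  have hbh : bundle Y h = insert d (bundle X h) := by
    ext e
    simp only [bundle, Finset.mem_filter, Finset.mem_univ, true_and, Finset.mem_insert, hY,
      Function.update_apply]
    by_cases he : e = d <;> simp [he]
  have hNR : NonRedundant v Y := by
    intro h'
    by_cases hh : h' = h
    · subst hh
      rw [hbh, hins, hX h', Finset.card_insert_of_notMem hdA]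
      push_cast
      ring
    · have hbh' : bundle Y h' = (bundle X h').erase d := by
        ext e
        simp only [bundle, Finset.mem_filter, Finset.mem_univ, true_and, Finset.mem_erase, hY,
          Function.update_apply]
        by_cases he : e = d <;> simp [he, hh, Ne.symm hh]
      rw [hbh']
      exact mrf_subset_indep (hv h') (hX h') (Finset.erase_subset _ _)
  have hdlt : optUtil c d (X d) < c d h := by
    rcases hpref d hdS with hc | hc
    · exact absurd hc hne
    · exact hc
  have hsum : DUSW c X < DUSW c Y := by
    unfold DUSW
    rw [← Finset.sum_erase_add _ _ (Finset.mem_univ d),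
      ← Finset.sum_erase_add _ _ (Finset.mem_univ d)]
    have he : ∑ e ∈ Finset.univ.erase d, optUtil c e (X e)
        = ∑ e ∈ Finset.univ.erase d, optUtil c e (Y e) := by
      apply Finset.sum_congr rfl
      intro e hee
      rw [hYe e (Finset.ne_of_mem_erase hee)]
    rw [he, hYd]
    have : optUtil c d (some h) = c d h := rfl
    rw [this]
    linarith
  exact absurd (hmax Y hNR) (not_le.2 hsum)
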